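/- arXiv:1907.01928 — 3 statements merged into one kernel-verified Lean document; each statement's English description precedes it below -/
import Mathlib

section
/- Ancient Gronwall-type estimate: let F, G : (−∞, τ₀] → [0, ∞) be bounded continuous functions with F differentiable and satisfying F'(τ) ≤ −2λ|τ| F(τ) + C G(τ) for all τ ≤ τ₀ < 0, where λ, C > 0. Then there exists C' depending only on λ, C such that sup_{τ ≤ τ₀} |τ|^{−1/2} F(τ) ≤ (C'/|τ₀|) · sup_{τ ≤ τ₀} |τ|^{−1/2} G(τ). -/
open Real Filter Set

/-- Ancient Gronwall-type estimate: if `F' ≤ -2λ|τ| F + C G` on `(-∞, τ₀]` with `F, G`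
bounded, nonnegative and continuous, then
`sup_{τ ≤ τ₀} |τ|^{-1/2} F(τ) ≤ (C'/|τ₀|) sup_{τ ≤ τ₀} |τ|^{-1/2} G(τ)`
for a constant `C'` depending only on `λ` and `C`. -/
theorem stmt8 (lam C : ℝ) (hlam : 0 < lam) (hC : 0 < C) :
    ∃ C' : ℝ, 0 < C' ∧
      ∀ (τ₀ : ℝ), τ₀ < 0 →
      ∀ (F G : ℝ → ℝ),
        (∀ τ ≤ τ₀, 0 ≤ F τ) → (∀ τ ≤ τ₀, 0 ≤ G τ) →
        ContinuousOn F (Set.Iic τ₀) → ContinuousOn G (Set.Iic τ₀) →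
        (∃ M₀ : ℝ, ∀ τ ≤ τ₀, F τ ≤ M₀ ∧ G τ ≤ M₀) →
        (∀ τ ≤ τ₀, DifferentiableAt ℝ F τ) →
        (∀ τ ≤ τ₀, deriv F τ ≤ -2 * lam * |τ| * F τ + C * G τ) →
        ∀ M : ℝ, (∀ τ ≤ τ₀, |τ| ^ (-(1 : ℝ) / 2) * G τ ≤ M) →
          ∀ τ ≤ τ₀, |τ| ^ (-(1 : ℝ) / 2) * F τ ≤ (C' / |τ₀|) * M := by
  refine ⟨C / (2 * lam), by positivity, ?_⟩
  intro τ₀ hτ₀ F G hF0 hG0 hFc hGc ⟨M₀, hM₀⟩ hdiff hode M hM τ hτ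
  have hτneg : τ < 0 := lt_of_le_of_lt hτ hτ₀
  -- M is nonnegative
  have hM0 : 0 ≤ M :=
    le_trans (mul_nonneg (Real.rpow_nonneg (abs_nonneg _) _) (hG0 τ₀ le_rfl)) (hM τ₀ le_rfl)
  set c : ℝ := C * M / (2 * lam) with hcdef
  have hc0 : 0 ≤ c := by positivity
  set ψ : ℝ → ℝ := fun s => Real.exp (-lam * s ^ 2) * F s
      - c * (Real.exp (-lam * s ^ 2) * (-s) ^ (-(1:ℝ)/2)) with hψdef
  -- the derivative of ψ at points s < τ₀
  have hψderiv : ∀ s < τ₀, HasDerivAt ψ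
      ((Real.exp (-lam * s ^ 2) * (-lam * (2 * s)) * F s
          + Real.exp (-lam * s ^ 2) * deriv F s)
        - c * (Real.exp (-lam * s ^ 2) * (-lam * (2 * s)) * (-s) ^ (-(1:ℝ)/2)
          + Real.exp (-lam * s ^ 2) * ((-(1:ℝ)/2) * (-s) ^ (-(1:ℝ)/2 - 1) * (-1)))) s := by
    intro s hs
    have hsneg : s < 0 := hs.trans hτ₀
    have h1 : HasDerivAt (fun t : ℝ => -lam * t ^ 2) (-lam * (2 * s)) s := by
      simpa using (hasDerivAt_pow 2 s).const_mul (-lam)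
    have he : HasDerivAt (fun t : ℝ => Real.exp (-lam * t ^ 2))
        (Real.exp (-lam * s ^ 2) * (-lam * (2 * s))) s := h1.exp
    have hFd : HasDerivAt F (deriv F s) s := (hdiff s hs.le).hasDerivAt
    have hr : HasDerivAt (fun t : ℝ => (-t) ^ (-(1:ℝ)/2))
        ((-(1:ℝ)/2) * (-s) ^ (-(1:ℝ)/2 - 1) * (-1)) s := by
      have := (Real.hasDerivAt_rpow_const (x := -s) (p := -(1:ℝ)/2)
        (Or.inl (by linarith : -s ≠ 0))).comp s (hasDerivAt_neg s)
      simpa [Function.comp_def] using this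
    exact (he.mul hFd).sub ((he.mul hr).const_mul c)
  -- the derivative of ψ is nonpositive on (-∞, τ₀)
  have hψle : ∀ s < τ₀, deriv ψ s ≤ 0 := by
    intro s hs
    have hsneg : s < 0 := hs.trans hτ₀
    rw [(hψderiv s hs).deriv]
    set e := Real.exp (-lam * s ^ 2) with hedef
    have he0 : 0 < e := Real.exp_pos _
    have hxpos : (0:ℝ) < -s := by linarith
    have hG : G s ≤ M * (-s) ^ ((1:ℝ)/2) := by
      have h := hM s hs.le
      rw [abs_of_neg hsneg] at h
      have := mul_le_mul_of_nonneg_left h (Real.rpow_nonneg hxpos.le ((1:ℝ)/2))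
      calc G s = (-s) ^ ((1:ℝ)/2) * ((-s) ^ (-(1:ℝ)/2) * G s) := by
            rw [← mul_assoc, ← Real.rpow_add hxpos]; norm_num
        _ ≤ (-s) ^ ((1:ℝ)/2) * M := this
        _ = M * (-s) ^ ((1:ℝ)/2) := mul_comm _ _
    have hd : deriv F s ≤ 2 * lam * s * F s + C * G s := by
      have := hode s hs.le
      rw [abs_of_neg hsneg] at this; linarith
    have hx1 : (-s) * (-s) ^ (-(1:ℝ)/2) = (-s) ^ ((1:ℝ)/2) := by
      nth_rewrite 1 [← Real.rpow_one (-s)]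
      rw [← Real.rpow_add hxpos]; norm_num
    have hq : (0:ℝ) ≤ (-s) ^ (-(1:ℝ)/2 - 1) := Real.rpow_nonneg hxpos.le _
    have hceq : 2 * lam * c = C * M := by
      rw [hcdef]; field_simp
    have h1 : e * deriv F s ≤ e * (2 * lam * s * F s + C * G s) :=
      mul_le_mul_of_nonneg_left hd he0.le
    have h2 : C * e * G s ≤ C * e * (M * (-s) ^ ((1:ℝ)/2)) :=
      mul_le_mul_of_nonneg_left hG (by positivity)
    have h3 : 0 ≤ c * e * (-s) ^ (-(1:ℝ)/2 - 1) := by positivity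
    have h4 : c * (e * (-lam * (2 * s)) * (-s) ^ (-(1:ℝ)/2))
        = C * M * (e * (-s) ^ ((1:ℝ)/2)) := by
      calc c * (e * (-lam * (2 * s)) * (-s) ^ (-(1:ℝ)/2))
          = 2 * lam * c * (e * ((-s) * (-s) ^ (-(1:ℝ)/2))) := by ring
        _ = 2 * lam * c * (e * (-s) ^ ((1:ℝ)/2)) := by rw [hx1]
        _ = C * M * (e * (-s) ^ ((1:ℝ)/2)) := by rw [hceq]
    nlinarith [h1, h2, h3, h4]
  -- ψ is antitone on Iic τ₀
  have hcont : ContinuousOn ψ (Set.Iic τ₀) := by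
    have hec : Continuous fun t : ℝ => Real.exp (-lam * t ^ 2) := by fun_prop
    have hrc : ContinuousOn (fun t : ℝ => (-t) ^ (-(1:ℝ)/2)) (Set.Iic τ₀) := by
      intro t ht
      have : -t ≠ 0 := by simp only [Set.mem_Iic] at ht; intro h; nlinarith
      exact ((Real.continuousAt_rpow_const (-t) _ (Or.inl this)).comp
        (continuous_neg.continuousAt)).continuousWithinAt
    exact (hec.continuousOn.mul hFc).sub
      (continuousOn_const.mul (hec.continuousOn.mul hrc))
  have hanti : AntitoneOn ψ (Set.Iic τ₀) := by
    apply antitoneOn_of_deriv_nonpos (convex_Iic τ₀) hcont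
    · intro s hs
      rw [interior_Iic] at hs
      exact (hψderiv s hs).differentiableAt.differentiableWithinAt
    · intro s hs
      rw [interior_Iic] at hs
      exact hψle s hs
  -- ψ tends to 0 at -∞
  have hexp0 : Tendsto (fun s : ℝ => Real.exp (-lam * s ^ 2)) atBot (nhds 0) := by
    apply Real.tendsto_exp_atBot.comp
    rw [tendsto_const_mul_atBot_of_neg (by linarith : -lam < 0)]
    have : Tendsto (fun s : ℝ => (-s) ^ 2) atBot atTop :=
      (tendsto_pow_atTop two_ne_zero).comp tendsto_neg_atBot_atTop
    simpa [neg_pow] using this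
  have hT1 : Tendsto (fun s => Real.exp (-lam * s ^ 2) * F s) atBot (nhds 0) := by
    apply tendsto_of_tendsto_of_tendsto_of_le_of_le' tendsto_const_nhds
      (by have := hexp0.const_mul M₀; rwa [mul_zero] at this)
    · filter_upwards [eventually_le_atBot τ₀] with s hs
      exact mul_nonneg (Real.exp_pos _).le (hF0 s hs)
    · filter_upwards [eventually_le_atBot τ₀] with s hs
      calc Real.exp (-lam * s ^ 2) * F s ≤ Real.exp (-lam * s ^ 2) * M₀ :=
            mul_le_mul_of_nonneg_left (hM₀ s hs).1 (Real.exp_pos _).le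
        _ = M₀ * Real.exp (-lam * s ^ 2) := mul_comm _ _
  have hT2 : Tendsto (fun s => c * (Real.exp (-lam * s ^ 2) * (-s) ^ (-(1:ℝ)/2)))
      atBot (nhds 0) := by
    apply tendsto_of_tendsto_of_tendsto_of_le_of_le' tendsto_const_nhds
      (by have := hexp0.const_mul (c * (-τ₀) ^ (-(1:ℝ)/2)); rwa [mul_zero] at this)
    · filter_upwards [eventually_le_atBot τ₀] with s hs
      have hsneg : s < 0 := lt_of_le_of_lt hs hτ₀
      exact mul_nonneg hc0 (mul_nonneg (Real.exp_pos _).le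
        (Real.rpow_nonneg (by linarith) _))
    · filter_upwards [eventually_le_atBot τ₀] with s hs
      have hsneg : s < 0 := lt_of_le_of_lt hs hτ₀
      have hub : (-s) ^ (-(1:ℝ)/2) ≤ (-τ₀) ^ (-(1:ℝ)/2) :=
        Real.rpow_le_rpow_of_nonpos (by linarith) (by linarith) (by norm_num)
      calc c * (Real.exp (-lam * s ^ 2) * (-s) ^ (-(1:ℝ)/2))
          ≤ c * (Real.exp (-lam * s ^ 2) * (-τ₀) ^ (-(1:ℝ)/2)) := by
            apply mul_le_mul_of_nonneg_left _ hc0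
            exact mul_le_mul_of_nonneg_left hub (Real.exp_pos _).le
        _ = c * (-τ₀) ^ (-(1:ℝ)/2) * Real.exp (-lam * s ^ 2) := by ring
  have hψ0 : Tendsto ψ atBot (nhds 0) := by
    have := hT1.sub hT2
    rw [sub_zero] at this
    exact this
  -- conclude ψ τ ≤ 0
  have hψτ : ψ τ ≤ 0 := by
    apply ge_of_tendsto hψ0
    filter_upwards [eventually_le_atBot τ] with s hs
    exact hanti (Set.mem_Iic.mpr (hs.trans hτ)) (Set.mem_Iic.mpr hτ) hs
  -- turn it into the claimed bound
  have hFτ : F τ ≤ c * (-τ) ^ (-(1:ℝ)/2) := by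
    have he0 : 0 < Real.exp (-lam * τ ^ 2) := Real.exp_pos _
    have : Real.exp (-lam * τ ^ 2) * F τ
        ≤ Real.exp (-lam * τ ^ 2) * (c * (-τ) ^ (-(1:ℝ)/2)) := by
      have := hψτ
      simp only [hψdef, sub_nonpos] at this ⊢
      linarith [this]
    exact le_of_mul_le_mul_left this he0
  have hτpos : (0:ℝ) < -τ := by linarith
  have hτ₀pos : (0:ℝ) < -τ₀ := by linarith
  rw [abs_of_neg hτneg, abs_of_neg hτ₀]
  have key : (-τ) ^ (-(1:ℝ)/2) * F τ ≤ c * (-τ)⁻¹ := by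
    calc (-τ) ^ (-(1:ℝ)/2) * F τ ≤ (-τ) ^ (-(1:ℝ)/2) * (c * (-τ) ^ (-(1:ℝ)/2)) :=
          mul_le_mul_of_nonneg_left hFτ (Real.rpow_nonneg hτpos.le _)
      _ = c * ((-τ) ^ (-(1:ℝ)/2) * (-τ) ^ (-(1:ℝ)/2)) := by ring
      _ = c * (-τ)⁻¹ := by
          rw [← Real.rpow_add hτpos]
          norm_num [Real.rpow_neg_one]
  calc (-τ) ^ (-(1:ℝ)/2) * F τ ≤ c * (-τ)⁻¹ := key
    _ ≤ c * (-τ₀)⁻¹ := by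
        apply mul_le_mul_of_nonneg_left _ hc0
        exact inv_anti₀ hτ₀pos (by linarith)
    _ = C / (2 * lam) / (-τ₀) * M := by rw [hcdef]; ring
end

section
/- Monotone cutoff Fubini bound: let φ : [0,∞) → [0,1] be nonincreasing with support in [0, M], and let w be measurable with ∫₀^M w² dσ < ∞. Then ∫₀^∞ φ(σ)² (∫₀^σ |w(σ')| dσ')² e^{−σ²/4} dσ ≤ C ∫₀^M φ(σ')² w(σ')² e^{−σ'²/4} dσ' for an absolute constant C. -/
open MeasureTheory Set

-- Gaussian tail lemma
lemma gauss_tail_int (a : ℝ) (ha : 0 ≤ a) :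
    IntegrableOn (fun x => x * Real.exp (-x^2/4)) (Set.Ioi a) ∧
    ∫ x in Set.Ioi a, x * Real.exp (-x^2/4) = 2 * Real.exp (-a^2/4) := by
  have hderiv : ∀ x ∈ Set.Ici a, HasDerivAt (fun x : ℝ => -2 * Real.exp (-x^2/4))
      (x * Real.exp (-x^2/4)) x := by
    intro x _
    have h1 : HasDerivAt (fun x : ℝ => -x^2/4) (-x/2) x := by
      have := ((hasDerivAt_pow 2 x).neg).div_const 4
      exact this.congr_deriv (by norm_num; ring)
    have := (h1.exp).const_mul (-2 : ℝ)
    exact this.congr_deriv (by ring)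
  have hpos : ∀ x ∈ Set.Ioi a, 0 ≤ x * Real.exp (-x^2/4) := fun x hx =>
    mul_nonneg (le_of_lt (lt_of_le_of_lt ha hx)) (Real.exp_nonneg _)
  have hlim : Filter.Tendsto (fun x : ℝ => -2 * Real.exp (-x^2/4)) Filter.atTop (nhds 0) := by
    have : Filter.Tendsto (fun x : ℝ => -x^2/4) Filter.atTop Filter.atBot := by
      apply Filter.Tendsto.atBot_div_const (by norm_num)
      exact Filter.tendsto_neg_atBot_iff.mpr (Filter.tendsto_pow_atTop (by norm_num))
    have h2 := Real.tendsto_exp_atBot.comp this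
    have := h2.const_mul (-2 : ℝ)
    simpa using this
  constructor
  · exact integrableOn_Ioi_deriv_of_nonneg' hderiv hpos hlim
  · have := integral_Ioi_of_hasDerivAt_of_nonneg' hderiv hpos hlim
    rw [this]; ring

lemma gauss_tail_lint (a : ℝ) (ha : 0 ≤ a) :
    ∫⁻ x in Set.Ioi a, ENNReal.ofReal (x * Real.exp (-x^2/4)) =
      ENNReal.ofReal (2 * Real.exp (-a^2/4)) := by
  obtain ⟨hint, heq⟩ := gauss_tail_int a ha
  rw [← heq, ← ofReal_integral_eq_lintegral_ofReal hint]
  exact (ae_restrict_iff' measurableSet_Ioi).mpr (Filter.Eventually.of_forall fun x hx =>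
    mul_nonneg (le_of_lt (lt_of_le_of_lt ha hx)) (Real.exp_nonneg _))

-- Cauchy-Schwarz
lemma cs_bound {w : ℝ → ℝ} (hw : Measurable w) {σ : ℝ} (hσ : 0 < σ)
    (hw2 : IntegrableOn (fun t => (w t)^2) (Set.Ioc 0 σ)) :
    (∫ t in Set.Ioc (0:ℝ) σ, |w t|)^2 ≤ σ * ∫ t in Set.Ioc (0:ℝ) σ, (w t)^2 := by
  set μ := volume.restrict (Set.Ioc (0:ℝ) σ)
  haveI : IsFiniteMeasure μ := by
    constructor
    rw [Measure.restrict_apply_univ, Real.volume_Ioc]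
    exact ENNReal.ofReal_lt_top
  have hpq : Real.HolderConjugate 2 2 := Real.HolderConjugate.two_two
  have hmemw : MemLp (fun t => |w t|) (ENNReal.ofReal 2) μ := by
    rw [show ENNReal.ofReal 2 = 2 by norm_num]
    refine (memLp_two_iff_integrable_sq hw.abs.aestronglyMeasurable).mpr ?_
    simp only [sq_abs]; exact hw2
  have hmem1 : MemLp (fun _ : ℝ => (1:ℝ)) (ENNReal.ofReal 2) μ := memLp_const 1
  have h := integral_mul_le_Lp_mul_Lq_of_nonneg hpq
    (Filter.Eventually.of_forall fun t => abs_nonneg (w t))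
    (Filter.Eventually.of_forall fun _ => zero_le_one) hmemw hmem1
  simp only [mul_one, Real.one_rpow] at h
  have habs : ∀ t : ℝ, |w t| ^ (2:ℝ) = (w t)^2 := fun t => by
    rw [show (2:ℝ) = ((2:ℕ):ℝ) by norm_num, Real.rpow_natCast, sq_abs]
  simp only [habs] at h
  have hμ1 : ∫ _ : ℝ, (1:ℝ) ∂μ = σ := by
    simp [μ, Real.volume_Ioc, hσ.le]
  rw [hμ1] at h
  have hInonneg : 0 ≤ ∫ t in Set.Ioc (0:ℝ) σ, (w t)^2 :=
    setIntegral_nonneg measurableSet_Ioc fun t _ => sq_nonneg _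
  calc (∫ t in Set.Ioc (0:ℝ) σ, |w t|)^2
      ≤ ((∫ t in Set.Ioc (0:ℝ) σ, (w t)^2) ^ (1/(2:ℝ)) * σ ^ (1/(2:ℝ)))^2 := by
        apply pow_le_pow_left₀ (setIntegral_nonneg measurableSet_Ioc fun t _ => abs_nonneg _) h
    _ = σ * ∫ t in Set.Ioc (0:ℝ) σ, (w t)^2 := by
        rw [mul_pow, ← Real.rpow_natCast (_ ^ (1/(2:ℝ))) 2, ← Real.rpow_natCast ((σ:ℝ) ^ (1/(2:ℝ))) 2,
          ← Real.rpow_mul hInonneg, ← Real.rpow_mul hσ.le]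
        norm_num
        ring

/-- Monotone cutoff Fubini bound: for a nonincreasing cutoff `φ : [0,∞) → [0,1]`
supported in `[0, M]` and `w` with `∫₀^M w² < ∞`, one has
`∫₀^∞ φ² (∫₀^σ |w|)² e^{-σ²/4} dσ ≤ C ∫₀^M φ² w² e^{-σ²/4} dσ` for an absolute `C`. -/
theorem stmt17 :
    ∃ C : ℝ, 0 < C ∧
      ∀ (M : ℝ) (φ w : ℝ → ℝ), 0 < M →
        (∀ σ, 0 ≤ φ σ ∧ φ σ ≤ 1) →
        AntitoneOn φ (Set.Ici 0) →
        (∀ σ ≥ M, φ σ = 0) →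
        Measurable w →
        IntegrableOn (fun σ => (w σ) ^ 2) (Set.Ioc 0 M) →
        ∫ σ in Set.Ioi (0 : ℝ),
            (φ σ) ^ 2 * (∫ σ' in Set.Ioc (0 : ℝ) σ, |w σ'|) ^ 2 * Real.exp (-σ ^ 2 / 4)
          ≤ C * ∫ σ' in Set.Ioc (0 : ℝ) M,
              (φ σ') ^ 2 * (w σ') ^ 2 * Real.exp (-σ' ^ 2 / 4) := by
  refine ⟨2, by norm_num, ?_⟩
  intro M φ w hM hφ01 hanti hsupp hwmeas hw2
  -- replace φ by a globally antitone, measurable ψ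
  set ψ : ℝ → ℝ := fun σ => φ (max σ 0) with hψdef
  have hψanti : Antitone ψ := fun a b hab =>
    hanti (le_max_right a 0) (le_max_right b 0) (max_le_max hab le_rfl)
  have hψmeas : Measurable ψ := hψanti.measurable
  have hψeq : ∀ σ : ℝ, 0 ≤ σ → ψ σ = φ σ := fun σ hσ => by
    simp only [hψdef, max_eq_left hσ]
  have hψ01 : ∀ σ, 0 ≤ ψ σ ∧ ψ σ ≤ 1 := fun σ => hφ01 _
  have hψsupp : ∀ σ ≥ M, ψ σ = 0 := fun σ hσ => by
    rw [hψeq σ (le_trans hM.le hσ)]; exact hsupp σ hσ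
  have hψantiOn : ∀ a b : ℝ, a ≤ b → ψ b ≤ ψ a := fun a b hab => hψanti hab
  -- rewrite goal with ψ
  have hL : (∫ σ in Set.Ioi (0 : ℝ),
        (φ σ) ^ 2 * (∫ σ' in Set.Ioc (0 : ℝ) σ, |w σ'|) ^ 2 * Real.exp (-σ ^ 2 / 4)) =
      ∫ σ in Set.Ioi (0 : ℝ),
        (ψ σ) ^ 2 * (∫ σ' in Set.Ioc (0 : ℝ) σ, |w σ'|) ^ 2 * Real.exp (-σ ^ 2 / 4) :=
    setIntegral_congr_fun measurableSet_Ioi fun σ hσ => by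
      rw [hψeq σ (le_of_lt hσ)]
  have hR : (∫ σ' in Set.Ioc (0 : ℝ) M,
        (φ σ') ^ 2 * (w σ') ^ 2 * Real.exp (-σ' ^ 2 / 4)) =
      ∫ σ' in Set.Ioc (0 : ℝ) M,
        (ψ σ') ^ 2 * (w σ') ^ 2 * Real.exp (-σ' ^ 2 / 4) :=
    setIntegral_congr_fun measurableSet_Ioc fun σ hσ => by
      rw [hψeq σ (le_of_lt hσ.1)]
  rw [hL, hR]
  clear hL hR hanti hsupp hφ01
  set E : ℝ → ℝ := fun σ => Real.exp (-σ^2/4) with hEdef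
  have hEmeas : Measurable E := by
    apply Measurable.exp; exact (measurable_id.pow_const 2).neg.div_const 4
  have hEpos : ∀ σ, 0 < E σ := fun σ => Real.exp_pos _
  have hEle1 : ∀ σ, E σ ≤ 1 := fun σ =>
    Real.exp_le_one_iff.mpr (by nlinarith [sq_nonneg σ])
  -- integrability facts
  have hMfin : volume (Set.Ioc (0:ℝ) M) < ⊤ := by
    rw [Real.volume_Ioc]; exact ENNReal.ofReal_lt_top
  have hwabs : IntegrableOn (fun t => |w t|) (Set.Ioc 0 M) := by
    have hconst : IntegrableOn (fun _ : ℝ => (1:ℝ)) (Set.Ioc 0 M) :=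
      integrableOn_const hMfin.ne
    refine Integrable.mono (hconst.add hw2)
      hwmeas.abs.aestronglyMeasurable (Filter.Eventually.of_forall fun t => ?_)
    have h1 : |w t| ≤ 1 + (w t)^2 := by nlinarith [sq_abs (w t), abs_nonneg (w t), sq_nonneg (|w t| - 1)]
    have h2 : (0:ℝ) ≤ 1 + (w t)^2 := by positivity
    simpa [abs_abs, abs_of_nonneg h2] using h1
  have hψw2M : IntegrableOn (fun t => (ψ t)^2 * (w t)^2) (Set.Ioc 0 M) := by
    refine Integrable.mono hw2
      (((hψmeas.pow_const 2).mul (hwmeas.pow_const 2)).aestronglyMeasurable)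
      (Filter.Eventually.of_forall fun t => ?_)
    have h1 : (0:ℝ) ≤ (ψ t)^2 * (w t)^2 := by positivity
    have h2 : (ψ t)^2 * (w t)^2 ≤ (w t)^2 := by
      have ha := (hψ01 t).1; have hb := (hψ01 t).2
      have hψsq : (ψ t)^2 ≤ 1 := by nlinarith
      simpa using mul_le_mul_of_nonneg_right hψsq (sq_nonneg (w t))
    rw [Real.norm_of_nonneg h1, Real.norm_of_nonneg (sq_nonneg (w t))]
    exact h2
  set g : ℝ → ENNReal := fun t => ENNReal.ofReal ((ψ t)^2 * (w t)^2) with hgdef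
  have hgmeas : Measurable g := ((hψmeas.pow_const 2).mul (hwmeas.pow_const 2)).ennreal_ofReal
  -- primitive for measurability of inner integral
  set v : ℝ → ℝ := (Set.Ioc 0 M).indicator (fun t => |w t|) with hvdef
  have hvint : Integrable v := (integrable_indicator_iff measurableSet_Ioc).mpr hwabs
  set P : ℝ → ℝ := fun σ => ∫ t in (0:ℝ)..σ, v t with hPdef
  have hPcont : Continuous P :=
    intervalIntegral.continuous_primitive (fun a b => hvint.intervalIntegrable) 0
  have hPeq : ∀ σ ∈ Set.Ioc (0:ℝ) M, P σ = ∫ t in Set.Ioc (0:ℝ) σ, |w t| := by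
    intro σ hσ
    rw [hPdef]
    simp only
    rw [intervalIntegral.integral_of_le hσ.1.le]
    refine setIntegral_congr_fun measurableSet_Ioc fun t ht => ?_
    exact Set.indicator_of_mem (Set.Ioc_subset_Ioc_right hσ.2 ht) _
  set F : ℝ → ℝ := fun σ => (ψ σ) ^ 2 * (∫ σ' in Set.Ioc (0 : ℝ) σ, |w σ'|) ^ 2 * E σ with hFdef
  have hFnonneg : ∀ σ, 0 ≤ F σ := fun σ => by
    have := (hψ01 σ).1; have := (hEpos σ).le; positivity
  -- restrict LHS integral to Ioc 0 M
  have hstep1 : ∫ σ in Set.Ioi (0:ℝ), F σ = ∫ σ in Set.Ioc (0:ℝ) M, F σ := by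
    rw [show (∫ σ in Set.Ioi (0:ℝ), F σ) = ∫ σ in Set.Ioi (0:ℝ), (Set.Ioc 0 M).indicator F σ from
      setIntegral_congr_fun measurableSet_Ioi fun σ hσ => by
        by_cases h : σ ∈ Set.Ioc (0:ℝ) M
        · rw [Set.indicator_of_mem h]
        · have hσM : M ≤ σ := by
            rcases not_and_or.mp h with h' | h'
            · exact absurd hσ h'
            · exact le_of_lt (not_le.mp h')
          rw [Set.indicator_of_notMem h, hFdef]
          simp [hψsupp σ hσM]]
    rw [setIntegral_indicator measurableSet_Ioc,
      Set.inter_eq_self_of_subset_right Set.Ioc_subset_Ioi_self]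
  -- measurability of F on Ioc 0 M
  have hFmeasM : AEStronglyMeasurable F (volume.restrict (Set.Ioc (0:ℝ) M)) := by
    have h1 : AEStronglyMeasurable (fun σ => (ψ σ)^2 * (P σ)^2 * E σ)
        (volume.restrict (Set.Ioc (0:ℝ) M)) :=
      (((hψmeas.pow_const 2).mul ((hPcont.measurable).pow_const 2)).mul hEmeas).aestronglyMeasurable
    refine h1.congr ?_
    refine (ae_restrict_iff' measurableSet_Ioc).mpr (Filter.Eventually.of_forall fun σ hσ => ?_)
    rw [hFdef]; simp only; rw [hPeq σ hσ]
  -- key pointwise lintegral bound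
  have key : ∀ σ ∈ Set.Ioc (0:ℝ) M,
      ENNReal.ofReal (F σ) ≤ ENNReal.ofReal (σ * E σ) * ∫⁻ t in Set.Ioc (0:ℝ) σ, g t := by
    intro σ hσ
    have hw2σ : IntegrableOn (fun t => (w t)^2) (Set.Ioc 0 σ) :=
      hw2.mono_set (Set.Ioc_subset_Ioc_right hσ.2)
    have hψw2σ : IntegrableOn (fun t => (ψ t)^2 * (w t)^2) (Set.Ioc 0 σ) :=
      hψw2M.mono_set (Set.Ioc_subset_Ioc_right hσ.2)
    have hcs := cs_bound hwmeas hσ.1 hw2σ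
    have hmono : (ψ σ)^2 * ∫ t in Set.Ioc (0:ℝ) σ, (w t)^2 ≤
        ∫ t in Set.Ioc (0:ℝ) σ, (ψ t)^2 * (w t)^2 := by
      rw [← integral_const_mul]
      refine setIntegral_mono_on (hw2σ.const_mul _) hψw2σ measurableSet_Ioc fun t ht => ?_
      have h1 : ψ σ ≤ ψ t := hψanti ht.2
      have h2 : 0 ≤ ψ t := (hψ01 t).1
      have h3 : 0 ≤ ψ σ := (hψ01 σ).1
      have : (ψ σ)^2 ≤ (ψ t)^2 := by nlinarith
      exact mul_le_mul_of_nonneg_right this (sq_nonneg _)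
    have hreal : F σ ≤ (σ * E σ) * ∫ t in Set.Ioc (0:ℝ) σ, (ψ t)^2 * (w t)^2 := by
      have h1 : F σ ≤ (ψ σ)^2 * (σ * ∫ t in Set.Ioc (0:ℝ) σ, (w t)^2) * E σ := by
        rw [hFdef]; simp only
        have hψσ2 : (0:ℝ) ≤ (ψ σ)^2 := sq_nonneg _
        exact mul_le_mul_of_nonneg_right (mul_le_mul_of_nonneg_left hcs hψσ2) (hEpos σ).le
      calc F σ ≤ (ψ σ)^2 * (σ * ∫ t in Set.Ioc (0:ℝ) σ, (w t)^2) * E σ := h1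
        _ = (σ * E σ) * ((ψ σ)^2 * ∫ t in Set.Ioc (0:ℝ) σ, (w t)^2) := by ring
        _ ≤ (σ * E σ) * ∫ t in Set.Ioc (0:ℝ) σ, (ψ t)^2 * (w t)^2 := by
            refine mul_le_mul_of_nonneg_left hmono ?_
            exact mul_nonneg hσ.1.le (hEpos σ).le
    calc ENNReal.ofReal (F σ)
        ≤ ENNReal.ofReal ((σ * E σ) * ∫ t in Set.Ioc (0:ℝ) σ, (ψ t)^2 * (w t)^2) :=
          ENNReal.ofReal_le_ofReal hreal
      _ = ENNReal.ofReal (σ * E σ) *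
            ENNReal.ofReal (∫ t in Set.Ioc (0:ℝ) σ, (ψ t)^2 * (w t)^2) :=
          ENNReal.ofReal_mul (mul_nonneg hσ.1.le (hEpos σ).le)
      _ = ENNReal.ofReal (σ * E σ) * ∫⁻ t in Set.Ioc (0:ℝ) σ, g t := by
          rw [ofReal_integral_eq_lintegral_ofReal hψw2σ
            (Filter.Eventually.of_forall fun t => by positivity)]
  -- Fubini step
  have fub : (∫⁻ σ in Set.Ioc (0:ℝ) M, ENNReal.ofReal (σ * E σ) * ∫⁻ t in Set.Ioc (0:ℝ) σ, g t) ≤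
      ∫⁻ t in Set.Ioc (0:ℝ) M, g t * ENNReal.ofReal (2 * E t) := by
    set s : Set (ℝ × ℝ) := {p : ℝ × ℝ | p.1 ≤ M} ∩ {p : ℝ × ℝ | 0 < p.2} ∩ {p : ℝ × ℝ | p.2 ≤ p.1}
      with hsdef
    have hsmem : ∀ p : ℝ × ℝ, p ∈ s ↔ p.1 ∈ Set.Ioc (0:ℝ) M ∧ p.2 ∈ Set.Ioc (0:ℝ) p.1 := by
      intro p
      simp only [hsdef, Set.mem_inter_iff, Set.mem_setOf_eq, Set.mem_Ioc]
      constructor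
      · rintro ⟨⟨h1, h2⟩, h3⟩
        exact ⟨⟨lt_of_lt_of_le h2 h3, h1⟩, h2, h3⟩
      · rintro ⟨⟨_, h1⟩, h2, h3⟩
        exact ⟨⟨h1, h2⟩, h3⟩
    have hs : MeasurableSet s := by
      refine (MeasurableSet.inter ?_ ?_).inter ?_
      · exact measurable_fst measurableSet_Iic
      · exact measurable_snd measurableSet_Ioi
      · exact measurableSet_le measurable_snd measurable_fst
    set K : ℝ × ℝ → ENNReal :=
      s.indicator (fun p => ENNReal.ofReal (p.1 * E p.1) * g p.2) with hKdef
    have hKmeas : Measurable K := by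
      refine Measurable.indicator ?_ hs
      refine Measurable.mul ?_ (hgmeas.comp measurable_snd)
      refine Measurable.ennreal_ofReal ?_
      exact measurable_fst.mul (hEmeas.comp measurable_fst)
    have h1 : (∫⁻ σ in Set.Ioc (0:ℝ) M, ENNReal.ofReal (σ * E σ) * ∫⁻ t in Set.Ioc (0:ℝ) σ, g t)
        = ∫⁻ σ, ∫⁻ t, K (σ, t) := by
      rw [← lintegral_indicator measurableSet_Ioc]
      refine lintegral_congr fun σ => ?_
      by_cases hσ : σ ∈ Set.Ioc (0:ℝ) M
      · rw [Set.indicator_of_mem hσ]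
        have hpt : ∀ t, K (σ, t) =
            (Set.Ioc (0:ℝ) σ).indicator (fun t => ENNReal.ofReal (σ * E σ) * g t) t := by
          intro t
          by_cases ht : t ∈ Set.Ioc (0:ℝ) σ
          · rw [Set.indicator_of_mem ht, hKdef,
              Set.indicator_of_mem ((hsmem (σ, t)).mpr ⟨hσ, ht⟩)]
          · rw [Set.indicator_of_notMem ht, hKdef, Set.indicator_of_notMem]
            intro hmem
            exact ht ((hsmem (σ, t)).mp hmem).2
        rw [lintegral_congr hpt, lintegral_indicator measurableSet_Ioc,
          lintegral_const_mul _ hgmeas]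
      · rw [Set.indicator_of_notMem hσ]
        symm
        have hpt : ∀ t, K (σ, t) = 0 := by
          intro t
          rw [hKdef, Set.indicator_of_notMem]
          intro hmem
          exact hσ ((hsmem (σ, t)).mp hmem).1
        simp [hpt]
    have h2 : (∫⁻ σ, ∫⁻ t, K (σ, t)) = ∫⁻ t, ∫⁻ σ, K (σ, t) := by
      have := lintegral_lintegral_swap (μ := (volume : Measure ℝ)) (ν := (volume : Measure ℝ))
        (f := fun σ t => K (σ, t)) (by exact hKmeas.aemeasurable)
      simpa using this
    have h3 : ∀ t, (∫⁻ σ, K (σ, t)) ≤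
        (Set.Ioc (0:ℝ) M).indicator (fun t => g t * ENNReal.ofReal (2 * E t)) t := by
      intro t
      by_cases ht : t ∈ Set.Ioc (0:ℝ) M
      · rw [Set.indicator_of_mem ht]
        calc ∫⁻ σ, K (σ, t)
            ≤ ∫⁻ σ, (Set.Ici t).indicator (fun σ => ENNReal.ofReal (σ * E σ) * g t) σ := by
              refine lintegral_mono fun σ => ?_
              rw [hKdef]
              by_cases hmem : (σ, t) ∈ s
              · rw [Set.indicator_of_mem hmem,
                  Set.indicator_of_mem (Set.mem_Ici.mpr ((hsmem (σ, t)).mp hmem).2.2)]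
              · rw [Set.indicator_of_notMem hmem]
                exact zero_le
          _ = ∫⁻ σ in Set.Ici t, ENNReal.ofReal (σ * E σ) * g t :=
              lintegral_indicator measurableSet_Ici _
          _ = ∫⁻ σ in Set.Ioi t, ENNReal.ofReal (σ * E σ) * g t :=
              (setLIntegral_congr Ioi_ae_eq_Ici).symm
          _ = (∫⁻ σ in Set.Ioi t, ENNReal.ofReal (σ * E σ)) * g t := by
              have hm : Measurable fun σ : ℝ => ENNReal.ofReal (σ * E σ) :=
                (measurable_id.mul hEmeas).ennreal_ofReal
              rw [lintegral_mul_const _ hm]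
          _ = ENNReal.ofReal (2 * E t) * g t := by
              rw [hEdef]
              simp only
              rw [gauss_tail_lint t ht.1.le]
          _ = g t * ENNReal.ofReal (2 * E t) := mul_comm _ _
      · rw [Set.indicator_of_notMem ht]
        have hpt : ∀ σ, K (σ, t) = 0 := by
          intro σ
          rw [hKdef, Set.indicator_of_notMem]
          intro hmem
          obtain ⟨hσM, ht2⟩ := (hsmem (σ, t)).mp hmem
          exact ht ⟨ht2.1, le_trans ht2.2 hσM.2⟩
        simp [hpt]
    calc (∫⁻ σ in Set.Ioc (0:ℝ) M, ENNReal.ofReal (σ * E σ) * ∫⁻ t in Set.Ioc (0:ℝ) σ, g t)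
        = ∫⁻ t, ∫⁻ σ, K (σ, t) := by rw [h1, h2]
      _ ≤ ∫⁻ t, (Set.Ioc (0:ℝ) M).indicator (fun t => g t * ENNReal.ofReal (2 * E t)) t :=
          lintegral_mono h3
      _ = ∫⁻ t in Set.Ioc (0:ℝ) M, g t * ENNReal.ofReal (2 * E t) :=
          lintegral_indicator measurableSet_Ioc _
  -- finish
  have hRint : IntegrableOn (fun t => (ψ t)^2 * (w t)^2 * E t) (Set.Ioc 0 M) := by
    refine Integrable.mono hψw2M
      ((((hψmeas.pow_const 2).mul (hwmeas.pow_const 2)).mul hEmeas).aestronglyMeasurable)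
      (Filter.Eventually.of_forall fun t => ?_)
    have h0 : (0:ℝ) ≤ (ψ t)^2 * (w t)^2 := by positivity
    have h0' : (0:ℝ) ≤ (ψ t)^2 * (w t)^2 * E t := mul_nonneg h0 (hEpos t).le
    rw [Real.norm_of_nonneg h0', Real.norm_of_nonneg h0]
    calc (ψ t)^2 * (w t)^2 * E t ≤ (ψ t)^2 * (w t)^2 * 1 :=
        mul_le_mul_of_nonneg_left (hEle1 t) h0
      _ = (ψ t)^2 * (w t)^2 := mul_one _
  have hfinal : (∫⁻ t in Set.Ioc (0:ℝ) M, g t * ENNReal.ofReal (2 * E t)) =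
      ENNReal.ofReal (2 * ∫ t in Set.Ioc (0:ℝ) M, (ψ t)^2 * (w t)^2 * E t) := by
    have h1 : ∀ t, g t * ENNReal.ofReal (2 * E t) =
        ENNReal.ofReal ((ψ t)^2 * (w t)^2 * (2 * E t)) := fun t => by
      simp only [hgdef]
      rw [← ENNReal.ofReal_mul (by positivity)]
    calc (∫⁻ t in Set.Ioc (0:ℝ) M, g t * ENNReal.ofReal (2 * E t))
        = ∫⁻ t in Set.Ioc (0:ℝ) M, ENNReal.ofReal ((ψ t)^2 * (w t)^2 * (2 * E t)) :=
          lintegral_congr h1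
      _ = ENNReal.ofReal (∫ t in Set.Ioc (0:ℝ) M, (ψ t)^2 * (w t)^2 * (2 * E t)) :=
          (ofReal_integral_eq_lintegral_ofReal
            (by simpa [mul_comm, mul_assoc, mul_left_comm] using hRint.const_mul 2)
            (Filter.Eventually.of_forall fun t => by
              have := (hEpos t).le; positivity)).symm
      _ = ENNReal.ofReal (2 * ∫ t in Set.Ioc (0:ℝ) M, (ψ t)^2 * (w t)^2 * E t) := by
          rw [← integral_const_mul]
          congr 1
          refine setIntegral_congr_fun measurableSet_Ioc fun t _ => ?_
          ring
  -- put everything together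
  have hRnonneg : 0 ≤ ∫ t in Set.Ioc (0:ℝ) M, (ψ t)^2 * (w t)^2 * E t :=
    setIntegral_nonneg measurableSet_Ioc fun t _ => by
      have := (hEpos t).le; positivity
  have hLHS : ∫ σ in Set.Ioi (0:ℝ), F σ =
      (∫⁻ σ in Set.Ioc (0:ℝ) M, ENNReal.ofReal (F σ)).toReal := by
    rw [hstep1]
    exact integral_eq_lintegral_of_nonneg_ae
      (Filter.Eventually.of_forall fun σ => hFnonneg σ) hFmeasM
  have hchain : (∫⁻ σ in Set.Ioc (0:ℝ) M, ENNReal.ofReal (F σ)) ≤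
      ENNReal.ofReal (2 * ∫ t in Set.Ioc (0:ℝ) M, (ψ t)^2 * (w t)^2 * E t) := by
    calc (∫⁻ σ in Set.Ioc (0:ℝ) M, ENNReal.ofReal (F σ))
        ≤ ∫⁻ σ in Set.Ioc (0:ℝ) M, ENNReal.ofReal (σ * E σ) * ∫⁻ t in Set.Ioc (0:ℝ) σ, g t := by
          refine lintegral_mono_ae ((ae_restrict_iff' measurableSet_Ioc).mpr
            (Filter.Eventually.of_forall fun σ hσ => key σ hσ))
      _ ≤ ∫⁻ t in Set.Ioc (0:ℝ) M, g t * ENNReal.ofReal (2 * E t) := fub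
      _ = _ := hfinal
  show ∫ σ in Set.Ioi (0:ℝ), F σ ≤ 2 * ∫ t in Set.Ioc (0:ℝ) M, (ψ t)^2 * (w t)^2 * E t
  rw [hLHS]
  calc (∫⁻ σ in Set.Ioc (0:ℝ) M, ENNReal.ofReal (F σ)).toReal
      ≤ (ENNReal.ofReal (2 * ∫ t in Set.Ioc (0:ℝ) M, (ψ t)^2 * (w t)^2 * E t)).toReal :=
        ENNReal.toReal_mono ENNReal.ofReal_ne_top hchain
    _ = 2 * ∫ t in Set.Ioc (0:ℝ) M, (ψ t)^2 * (w t)^2 * E t :=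
        ENNReal.toReal_ofReal (by linarith)
end

section
/- Boundary-weighted Poincaré inequality on an interval: for any ℓ > 0 and smooth v : [0, ℓ] → ℝ, one has ∫₀^ℓ v'(σ)² e^{−σ²/4} dσ + (1/4)∫₀^ℓ v(σ)² e^{−σ²/4} dσ ≥ (1/4) ℓ e^{−ℓ²/4} v(ℓ)² + (1/16)∫₀^ℓ σ² v(σ)² e^{−σ²/4} dσ. -/
open intervalIntegral

/-- Boundary-weighted Poincaré inequality on `[0, ℓ]` with weight `e^{-σ²/4} dσ`. -/
theorem stmt18 (ℓ : ℝ) (hℓ : 0 < ℓ) (v : ℝ → ℝ)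
    (hv : ContDiffOn ℝ 1 v (Set.Icc 0 ℓ)) :
    (1 / 4) * ℓ * Real.exp (-ℓ ^ 2 / 4) * (v ℓ) ^ 2
      + (1 / 16) * ∫ σ in (0 : ℝ)..ℓ, σ ^ 2 * (v σ) ^ 2 * Real.exp (-σ ^ 2 / 4)
    ≤ (∫ σ in (0 : ℝ)..ℓ, (derivWithin v (Set.Icc 0 ℓ) σ) ^ 2 * Real.exp (-σ ^ 2 / 4))
      + (1 / 4) * ∫ σ in (0 : ℝ)..ℓ, (v σ) ^ 2 * Real.exp (-σ ^ 2 / 4) := by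
  have hle : (0:ℝ) ≤ ℓ := hℓ.le
  set s := Set.Icc (0:ℝ) ℓ with hs
  have huIcc : Set.uIcc (0:ℝ) ℓ = s := Set.uIcc_of_le hle
  set g := derivWithin v s with hg
  set E : ℝ → ℝ := fun σ => Real.exp (-σ ^ 2 / 4) with hE
  have hud : UniqueDiffOn ℝ s := uniqueDiffOn_Icc hℓ
  have hvc : ContinuousOn v s := hv.continuousOn
  have hgc : ContinuousOn g s := hv.continuousOn_derivWithin hud le_rfl
  have hEc : Continuous E := by
    exact Real.continuous_exp.comp (by continuity)
  have hint : ∀ f : ℝ → ℝ, ContinuousOn f s →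
      IntervalIntegrable f MeasureTheory.volume 0 ℓ := by
    intro f hf
    exact (huIcc ▸ hf).intervalIntegrable
  -- continuity of the integrands
  have hc1 : ContinuousOn (fun σ => g σ ^ 2 * E σ) s :=
    (hgc.pow 2).mul hEc.continuousOn
  have hc2 : ContinuousOn (fun σ => v σ ^ 2 * E σ) s :=
    (hvc.pow 2).mul hEc.continuousOn
  have hc3 : ContinuousOn (fun σ => σ ^ 2 * v σ ^ 2 * E σ) s :=
    (((continuous_id.pow 2).continuousOn).mul (hvc.pow 2)).mul hEc.continuousOn
  have hc4 : ContinuousOn (fun σ => σ * v σ * g σ * E σ) s :=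
    (((continuous_id.continuousOn).mul hvc).mul hgc).mul hEc.continuousOn
  have hi1 := hint _ hc1
  have hi2 := hint _ hc2
  have hi3 := hint _ hc3
  have hi4 := hint _ hc4
  -- the FTC identity for F σ = σ/2 * v σ ^ 2 * E σ
  set F : ℝ → ℝ := fun σ => σ / 2 * v σ ^ 2 * E σ with hF
  have hFc : ContinuousOn F s :=
    ((continuous_id.continuousOn.div_const 2).mul (hvc.pow 2)).mul hEc.continuousOn
  have hF' : ∀ x ∈ Set.Ioo (0:ℝ) ℓ, HasDerivAt F
      (1/2 * (v x ^ 2 * E x) + (x * v x * g x * E x) - 1/4 * (x ^ 2 * v x ^ 2 * E x)) x := by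
    intro x hx
    have hxs : x ∈ s := Set.Ioo_subset_Icc_self hx
    have hvd : HasDerivAt v (g x) x :=
      ((hv.differentiableOn one_ne_zero x hxs).hasDerivWithinAt).hasDerivAt
        (Icc_mem_nhds hx.1 hx.2)
    have h1 : HasDerivAt (fun σ : ℝ => -σ ^ 2 / 4) (-(x / 2)) x := by
      have := ((hasDerivAt_pow 2 x).neg).div_const 4
      exact this.congr_deriv (by simp only [Nat.cast_ofNat, Nat.add_one_sub_one, pow_one]; ring)
    have hEd : HasDerivAt E (Real.exp (-x ^ 2 / 4) * (-(x / 2))) x := h1.exp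
    have hFd := (((hasDerivAt_id x).div_const 2).mul (hvd.pow 2)).mul hEd
    refine hFd.congr_deriv ?_
    simp only [hE, id, Pi.mul_apply, Pi.pow_apply, Nat.cast_ofNat, Nat.add_one_sub_one, pow_one]
    ring
  have hintF : IntervalIntegrable
      (fun x => 1/2 * (v x ^ 2 * E x) + (x * v x * g x * E x) - 1/4 * (x ^ 2 * v x ^ 2 * E x))
      MeasureTheory.volume 0 ℓ :=
    ((hi2.const_mul (1/2)).add hi4).sub (hi3.const_mul (1/4))
  have hFTC := intervalIntegral.integral_eq_sub_of_hasDerivAt_of_le hle hFc hF' hintF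
  have hF0 : F 0 = 0 := by simp [hF]
  have hFℓ : F ℓ = ℓ / 2 * v ℓ ^ 2 * E ℓ := rfl
  rw [hF0, hFℓ, sub_zero] at hFTC
  have hsplit : (∫ σ in (0:ℝ)..ℓ,
      (1/2 * (v σ ^ 2 * E σ) + (σ * v σ * g σ * E σ) - 1/4 * (σ ^ 2 * v σ ^ 2 * E σ)))
      = 1/2 * (∫ σ in (0:ℝ)..ℓ, v σ ^ 2 * E σ) + (∫ σ in (0:ℝ)..ℓ, σ * v σ * g σ * E σ)
        - 1/4 * (∫ σ in (0:ℝ)..ℓ, σ ^ 2 * v σ ^ 2 * E σ) := by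
    rw [intervalIntegral.integral_sub ((hi2.const_mul (1/2)).add hi4) (hi3.const_mul (1/4)),
      intervalIntegral.integral_add (hi2.const_mul (1/2)) hi4,
      intervalIntegral.integral_const_mul, intervalIntegral.integral_const_mul]
  rw [hsplit] at hFTC
  -- nonnegativity of the square integral
  have h0 : 0 ≤ ∫ σ in (0:ℝ)..ℓ, (g σ - σ / 4 * v σ) ^ 2 * E σ :=
    intervalIntegral.integral_nonneg hle (fun x _ => by positivity)
  have hsq : (∫ σ in (0:ℝ)..ℓ, (g σ - σ / 4 * v σ) ^ 2 * E σ)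
      = (∫ σ in (0:ℝ)..ℓ, g σ ^ 2 * E σ) - 1/2 * (∫ σ in (0:ℝ)..ℓ, σ * v σ * g σ * E σ)
        + 1/16 * (∫ σ in (0:ℝ)..ℓ, σ ^ 2 * v σ ^ 2 * E σ) := by
    rw [← intervalIntegral.integral_const_mul, ← intervalIntegral.integral_const_mul,
      ← intervalIntegral.integral_sub hi1 (hi4.const_mul (1/2)),
      ← intervalIntegral.integral_add (hi1.sub (hi4.const_mul (1/2))) (hi3.const_mul (1/16))]
    apply intervalIntegral.integral_congr
    intro x _
    ring
  rw [hsq] at h0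
  nlinarith [h0, hFTC]
end
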